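/- arXiv:1901.08834 — 2 statements merged into one kernel-verified Lean document; each statement's English description precedes it below -/
import Mathlib

section
/- Let (X_j)_{j∈ℕ} be independent, identically distributed real-valued random variables with distribution P, and let P̂_n := n^{-1} Σ_{j=1}^n δ_{X_j} be the empirical distribution. Then for every M > 0, almost surely, sup { | ∫ g dP̂_n − ∫ g dP | : g : ℝ → [−M,M] monotone } → 0 as n → ∞. -/
open Filter Topology MeasureTheory ProbabilityTheory

/-- The empirical distribution `P̂_n = n⁻¹ Σ_{j=1}^n δ_{X_j}`. -/
noncomputable def empMeas {Ω : Type*} [MeasurableSpace Ω]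
    (X : ℕ → Ω → ℝ) (n : ℕ) (ω : Ω) : Measure ℝ :=
  ((n : ENNReal))⁻¹ • ∑ j ∈ Finset.Icc 1 n, Measure.dirac (X j ω)

open Set

private lemma mre {μ : Measure ℝ} [IsFiniteMeasure μ] {s u : Set ℝ} (h : s ⊆ u) :
    (μ s).toReal ≤ (μ u).toReal :=
  ENNReal.toReal_mono (measure_ne_top μ u) (measure_mono h)

private lemma msub {μ : Measure ℝ} [IsFiniteMeasure μ] {s u v : Set ℝ} (h : s ⊆ u ∪ v) :
    (μ s).toReal ≤ (μ u).toReal + (μ v).toReal := by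
  refine (mre h).trans ?_
  rw [← ENNReal.toReal_add (measure_ne_top μ u) (measure_ne_top μ v)]
  exact ENNReal.toReal_mono (by simp [measure_ne_top]) (measure_union_le u v)

private lemma mcompl {μ : Measure ℝ} [IsProbabilityMeasure μ] {s : Set ℝ} (hs : MeasurableSet s) :
    (μ sᶜ).toReal = 1 - (μ s).toReal := by
  rw [measure_compl hs (measure_ne_top μ s), measure_univ,
    ENNReal.toReal_sub_of_le prob_le_one ENNReal.one_ne_top, ENNReal.toReal_one]

private lemma abs_sub_le_of_mem {x y lo hi : ℝ} (hx1 : lo ≤ x) (hx2 : x ≤ hi) (hy1 : lo ≤ y)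
    (hy2 : y ≤ hi) : |x - y| ≤ hi - lo :=
  abs_sub_le_iff.mpr ⟨by linarith, by linarith⟩

/-- Existence of an `η`-fine grid for a probability measure on `ℝ`. -/
private lemma grid_exists (ν : Measure ℝ) [IsProbabilityMeasure ν] {η : ℝ} (hη : 0 < η) :
    ∃ (K : ℕ) (t : ℕ → ℝ), Monotone t ∧ (ν (Iio (t 0))).toReal ≤ η ∧
      (ν (Ioi (t K))).toReal ≤ η ∧ ∀ i < K, (ν (Ioo (t i) (t (i + 1)))).toReal ≤ η := by
  obtain ⟨N0, hN0⟩ := exists_nat_gt (1 / η)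
  set N : ℕ := N0 + 1 with hN
  have hNpos : (0:ℝ) < N := by positivity
  have hNη : 1 / ((N:ℝ) + 1) ≤ η := by
    rw [div_le_iff₀ (by positivity)]
    have h1 : 1 / η < (N:ℝ) + 1 := by
      push_cast [hN]
      push_cast at hN0
      linarith
    rw [div_lt_iff₀ hη] at h1
    linarith
  -- levels
  set c : ℕ → ℝ := fun i => ((min (i + 1) N : ℕ) : ℝ) / ((N:ℝ) + 1) with hc
  have hc_pos : ∀ i, 0 < c i := by
    intro i
    have : 1 ≤ min (i + 1) N := le_min (Nat.succ_le_succ (Nat.zero_le _)) (by omega)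
    apply div_pos _ (by positivity)
    exact_mod_cast Nat.lt_of_lt_of_le Nat.zero_lt_one this
  have hc_lt1 : ∀ i, c i < 1 := by
    intro i
    rw [div_lt_one (by positivity)]
    have : ((min (i + 1) N : ℕ) : ℝ) ≤ (N:ℝ) := by exact_mod_cast min_le_right _ _
    linarith
  have hc_mono : Monotone c := by
    intro i j hij
    have h1 : ((min (i + 1) N : ℕ) : ℝ) ≤ ((min (j + 1) N : ℕ) : ℝ) := by
      exact_mod_cast min_le_min (by omega) le_rfl
    have h2 : (0:ℝ) < (N:ℝ) + 1 := by positivity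
    simp only [hc]
    gcongr
    all_goals exact_mod_cast min_le_min (by omega : i + 1 ≤ j + 1) le_rfl
  -- quantiles
  set F := cdf ν with hF
  have hFIic : ∀ x, F x = (ν (Iic x)).toReal := fun x => cdf_eq_real ν x
  have hne : ∀ cc : ℝ, cc < 1 → {x | cc ≤ F x}.Nonempty := by
    intro cc hcc
    obtain ⟨x, hx⟩ := ((tendsto_cdf_atTop ν).eventually (eventually_ge_nhds hcc)).exists
    exact ⟨x, hx⟩
  have hbdd : ∀ cc : ℝ, 0 < cc → BddBelow {x | cc ≤ F x} := by
    intro cc hcc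
    obtain ⟨y, hy⟩ := ((tendsto_cdf_atBot ν).eventually (eventually_lt_nhds hcc)).exists
    refine ⟨y, fun x hx => ?_⟩
    by_contra hxy
    exact absurd hx (not_le.mpr ((lt_of_le_of_lt ((monotone_cdf ν) (le_of_lt (not_le.mp hxy))) hy)))
  set q : ℝ → ℝ := fun cc => sInf {x | cc ≤ F x} with hq
  have hFq : ∀ cc : ℝ, 0 < cc → cc < 1 → cc ≤ F (q cc) := by
    intro cc hcc0 hcc1
    obtain ⟨u, hu_anti, hu_t, hu_mem⟩ := exists_seq_tendsto_sInf (hne cc hcc1) (hbdd cc hcc0)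
    have hmem : ∀ᶠ n in atTop, u n ∈ Ici (q cc) :=
      Eventually.of_forall fun n => csInf_le (hbdd cc hcc0) (hu_mem n)
    have htv : Tendsto u atTop (𝓝[Ici (q cc)] (q cc)) :=
      tendsto_nhdsWithin_iff.mpr ⟨hu_t, hmem⟩
    have hcont := ((cdf ν).right_continuous (q cc)).tendsto.comp htv
    exact ge_of_tendsto hcont (Eventually.of_forall fun n => hu_mem n)
  have hGq : ∀ cc : ℝ, 0 < cc → cc < 1 → (ν (Iio (q cc))).toReal ≤ cc := by
    intro cc hcc0 hcc1
    set u : ℕ → ℝ := fun n => q cc - 1 / ((n:ℝ) + 1) with hu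
    have hu_lt : ∀ n, u n < q cc := fun n => sub_lt_self _ (by positivity)
    have hu_mono : Monotone fun n => Iic (u n) := by
      intro m n hmn
      apply Iic_subset_Iic.mpr
      have : 1 / ((n:ℝ) + 1) ≤ 1 / ((m:ℝ) + 1) := by
        apply one_div_le_one_div_of_le (by positivity)
        exact_mod_cast by omega
      simp only [hu]; linarith
    have hUnion : (⋃ n, Iic (u n)) = Iio (q cc) := by
      ext x
      simp only [mem_iUnion, mem_Iic, mem_Iio]
      constructor
      · rintro ⟨n, hn⟩; exact lt_of_le_of_lt hn (hu_lt n)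
      · intro hx
        obtain ⟨n, hn⟩ := exists_nat_one_div_lt (sub_pos.mpr hx)
        exact ⟨n, by simp only [hu]; linarith⟩
    have htd := tendsto_measure_iUnion_atTop (μ := ν) hu_mono
    rw [hUnion] at htd
    have hle : ν (Iio (q cc)) ≤ ENNReal.ofReal cc := by
      refine le_of_tendsto htd (Eventually.of_forall fun n => ?_)
      have hnot : ¬ (cc ≤ F (u n)) := by
        intro hcon
        exact absurd (csInf_le (hbdd cc hcc0) hcon) (not_le.mpr (hu_lt n))
      have : ν (Iic (u n)) = ENNReal.ofReal (F (u n)) := (ofReal_cdf ν (u n)).symm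
      rw [Function.comp_apply, this]
      exact ENNReal.ofReal_le_ofReal (le_of_lt (not_le.mp hnot))
    calc (ν (Iio (q cc))).toReal ≤ (ENNReal.ofReal cc).toReal :=
          ENNReal.toReal_mono ENNReal.ofReal_ne_top hle
      _ = cc := ENNReal.toReal_ofReal hcc0.le
  -- the grid
  refine ⟨N - 1, fun i => q (c i), fun i j hij => csInf_le_csInf (hbdd _ (hc_pos i))
    (hne _ (hc_lt1 j)) (fun x hx => le_trans (hc_mono hij) hx), ?_, ?_, ?_⟩
  · refine (hGq _ (hc_pos 0) (hc_lt1 0)).trans ?_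
    have : c 0 = 1 / ((N:ℝ) + 1) := by
      simp only [hc]
      rw [min_eq_left (by omega)]
      norm_num
    rw [this]; exact hNη
  · have hIoi : (ν (Ioi (q (c (N - 1))))).toReal = 1 - F (q (c (N - 1))) := by
      rw [← compl_Iic, mcompl measurableSet_Iic, hFIic]
    rw [hIoi]
    have hcK : c (N - 1) = (N:ℝ) / ((N:ℝ) + 1) := by
      simp only [hc]
      rw [min_eq_right (by omega)]
    have h2 := hFq _ (hc_pos (N - 1)) (hc_lt1 (N - 1))
    have h1 : 1 - (N:ℝ) / ((N:ℝ) + 1) = 1 / ((N:ℝ) + 1) := by field_simp; ring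
    linarith [hNη, h2, hcK.symm.le, hcK.le]
  · intro i hi
    by_cases hab : q (c i) < q (c (i + 1))
    · have hsum : (ν (Iic (q (c i)))).toReal + (ν (Ioo (q (c i)) (q (c (i + 1))))).toReal
          ≤ (ν (Iio (q (c (i + 1))))).toReal := by
        rw [← ENNReal.toReal_add (measure_ne_top _ _) (measure_ne_top _ _),
          ← measure_union (by
            apply Set.disjoint_left.mpr
            intro x hx1 hx2
            exact absurd hx2.1 (not_lt.mpr hx1)) measurableSet_Ioo]
        apply mre
        rintro x (hx | hx)
        · exact lt_of_le_of_lt hx hab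
        · exact hx.2
      have hg := hGq _ (hc_pos (i + 1)) (hc_lt1 (i + 1))
      have hf := hFq _ (hc_pos i) (hc_lt1 i)
      rw [hFIic] at hf
      have hci : c i = ((i:ℝ) + 1) / ((N:ℝ) + 1) := by
        simp only [hc]
        rw [min_eq_left (by omega)]
        push_cast; ring_nf
      have hci1 : ((i:ℝ) + 2) / ((N:ℝ) + 1) - ((i:ℝ) + 1) / ((N:ℝ) + 1)
          = 1 / ((N:ℝ) + 1) := by
        rw [div_sub_div_same]; norm_num
      have hci1' : c (i + 1) ≤ ((i:ℝ) + 2) / ((N:ℝ) + 1) := by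
        simp only [hc]
        gcongr
        all_goals {
          have h9 : ((min (i + 1 + 1) N : ℕ) : ℝ) ≤ (((i + 1 + 1 : ℕ)) : ℝ) := by
            exact_mod_cast min_le_left _ _
          push_cast at h9 ⊢
          linarith }
      linarith [hsum, hg, hf, hci, hci1, hci1', hNη]
    · rw [Set.Ioo_eq_empty hab]
      simp [hη.le]

private lemma abs_le_of_interval {x y lo hi B : ℝ} (hx1 : lo ≤ x) (hx2 : x ≤ hi)
    (hy1 : lo ≤ y) (hy2 : y ≤ hi) (h : hi - lo ≤ B) : |x - y| ≤ B :=
  (abs_sub_le_of_mem hx1 hx2 hy1 hy2).trans h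

/-- Interpolation: grid control plus control at grid points gives uniform control. -/
private lemma interp (μ ν : Measure ℝ) [IsProbabilityMeasure μ] [IsProbabilityMeasure ν]
    (K : ℕ) (t : ℕ → ℝ) (ht : Monotone t) {η δ : ℝ}
    (h0 : (ν (Iio (t 0))).toReal ≤ η) (hK : (ν (Ioi (t K))).toReal ≤ η)
    (hgap : ∀ i < K, (ν (Ioo (t i) (t (i + 1)))).toReal ≤ η)
    (hδ : ∀ i ≤ K, |(μ (Iic (t i))).toReal - (ν (Iic (t i))).toReal| ≤ δ ∧
      |(μ (Iio (t i))).toReal - (ν (Iio (t i))).toReal| ≤ δ) :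
    ∀ b : ℝ, |(μ (Iic b)).toReal - (ν (Iic b)).toReal| ≤ η + δ ∧
      |(μ (Iio b)).toReal - (ν (Iio b)).toReal| ≤ η + δ := by
  intro b
  have hδ0 : 0 ≤ δ := (abs_nonneg _).trans (hδ 0 (Nat.zero_le _)).1
  have hη0 : 0 ≤ η := ENNReal.toReal_nonneg.trans h0
  have hone : ∀ (ρ : Measure ℝ) [IsProbabilityMeasure ρ] (s : Set ℝ), (ρ s).toReal ≤ 1 := by
    intro ρ _ s
    simpa using mre (μ := ρ) (subset_univ s)
  rcases lt_or_ge b (t 0) with hb | hb0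
  -- case A : b < t 0
  · have hsub : Iic b ⊆ Iio (t 0) := fun x hx => lt_of_le_of_lt hx hb
    have hsub' : Iio b ⊆ Iio (t 0) := fun x hx => lt_trans hx hb
    have hμ0 : (μ (Iio (t 0))).toReal ≤ η + δ := by
      have := (hδ 0 (Nat.zero_le _)).2
      rw [abs_sub_le_iff] at this
      linarith [this.1]
    constructor
    · exact abs_le_of_interval ENNReal.toReal_nonneg ((mre hsub).trans hμ0)
        ENNReal.toReal_nonneg (((mre hsub).trans h0).trans (by linarith)) (by linarith)
    · exact abs_le_of_interval ENNReal.toReal_nonneg ((mre hsub').trans hμ0)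
        ENNReal.toReal_nonneg (((mre hsub').trans h0).trans (by linarith)) (by linarith)
  rcases le_or_gt (t K) b with hbK | hbK
  -- case B : t K ≤ b
  · have hν1 : 1 - η ≤ (ν (Iic (t K))).toReal := by
      have h1 : (ν (Iic (t K))).toReal = 1 - (ν (Ioi (t K))).toReal := by
        rw [← mcompl measurableSet_Ioi, compl_Ioi]
      linarith
    have hμ1 : 1 - η - δ ≤ (μ (Iic (t K))).toReal := by
      have := (hδ K le_rfl).1
      rw [abs_sub_le_iff] at this
      linarith [this.2]
    constructor
    · exact abs_le_of_interval (hμ1.trans (mre (Iic_subset_Iic.mpr hbK))) (hone μ _)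
        ((by linarith : 1 - η - δ ≤ (ν (Iic (t K))).toReal).trans
          (mre (Iic_subset_Iic.mpr hbK))) (hone ν _) (by linarith)
    · rcases eq_or_lt_of_le hbK with heq | hlt
      · exact (heq ▸ (hδ K le_rfl).2).trans (by linarith)
      · have hsub : Iic (t K) ⊆ Iio b := fun x hx => lt_of_le_of_lt hx hlt
        exact abs_le_of_interval (hμ1.trans (mre hsub)) (hone μ _)
          ((by linarith : 1 - η - δ ≤ (ν (Iic (t K))).toReal).trans (mre hsub)) (hone ν _)
          (by linarith)
  -- case C : t 0 ≤ b < t K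
  · have hIne : (Finset.filter (fun i => t i ≤ b) (Finset.range (K + 1))).Nonempty :=
      ⟨0, by simpa using hb0⟩
    set i₀ := (Finset.filter (fun i => t i ≤ b) (Finset.range (K + 1))).max' hIne with hi₀
    have hi₀mem := (Finset.filter (fun i => t i ≤ b) (Finset.range (K + 1))).max'_mem hIne
    rw [Finset.mem_filter, Finset.mem_range] at hi₀mem
    have hi₀le : t i₀ ≤ b := hi₀mem.2
    have hi₀K : i₀ < K := by
      rcases Nat.lt_or_ge i₀ K with h | h
      · exact h
      · exfalso
        have : i₀ = K := by omega
        exact absurd (this ▸ hi₀le) (not_le.mpr hbK)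
    have hbnext : b < t (i₀ + 1) := by
      by_contra hcon
      push_neg at hcon
      have hmem : i₀ + 1 ∈ Finset.filter (fun i => t i ≤ b) (Finset.range (K + 1)) := by
        rw [Finset.mem_filter, Finset.mem_range]
        exact ⟨by omega, hcon⟩
      have := Finset.le_max' _ _ hmem
      omega
    set a := t i₀
    set a' := t (i₀ + 1)
    set L := (ν (Iic a)).toReal with hL
    have hgap' : (ν (Iio a')).toReal ≤ L + η := by
      have hsub : Iio a' ⊆ Iic a ∪ Ioo a a' := by
        intro x hx
        rcases le_or_gt x a with h | h
        · exact Or.inl h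
        · exact Or.inr ⟨h, hx⟩
      refine (msub hsub).trans ?_
      have := hgap i₀ hi₀K
      linarith
    have hμa : L - δ ≤ (μ (Iic a)).toReal := by
      have := (hδ i₀ (by omega)).1
      rw [abs_sub_le_iff] at this
      linarith [this.2]
    have hμa' : (μ (Iio a')).toReal ≤ L + η + δ := by
      have := (hδ (i₀ + 1) (by omega)).2
      rw [abs_sub_le_iff] at this
      linarith [this.1]
    constructor
    · have hx1 : L - δ ≤ (μ (Iic b)).toReal := hμa.trans (mre (Iic_subset_Iic.mpr hi₀le))
      have hx2 : (μ (Iic b)).toReal ≤ L + η + δ :=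
        (mre (fun x (hx : x ∈ Iic b) => lt_of_le_of_lt hx hbnext)).trans hμa'
      have hy1 : L ≤ (ν (Iic b)).toReal := mre (Iic_subset_Iic.mpr hi₀le)
      have hy2 : (ν (Iic b)).toReal ≤ L + η :=
        (mre (fun x (hx : x ∈ Iic b) => lt_of_le_of_lt hx hbnext)).trans hgap'
      rw [abs_sub_le_iff]
      exact ⟨by linarith, by linarith⟩
    · rcases eq_or_lt_of_le hi₀le with heq | hlt
      · rw [← heq]
        exact ((hδ i₀ (by omega)).2).trans (by linarith)
      · have hsub : Iic a ⊆ Iio b := fun x hx => lt_of_le_of_lt hx hlt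
        have hx1 : L - δ ≤ (μ (Iio b)).toReal := hμa.trans (mre hsub)
        have hx2 : (μ (Iio b)).toReal ≤ L + η + δ :=
          (mre (fun x (hx : x ∈ Iio b) => lt_trans hx hbnext)).trans hμa'
        have hy1 : L ≤ (ν (Iio b)).toReal := mre hsub
        have hy2 : (ν (Iio b)).toReal ≤ L + η :=
          (mre (fun x (hx : x ∈ Iio b) => lt_trans hx hbnext)).trans hgap'
        rw [abs_sub_le_iff]
        exact ⟨by linarith, by linarith⟩

private lemma empMeas_apply {Ω : Type*} [MeasurableSpace Ω] (X : ℕ → Ω → ℝ) (n : ℕ) (ω : Ω)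
    (S : Set ℝ) :
    (empMeas X n ω S).toReal
      = (∑ j ∈ Finset.Icc 1 n, S.indicator (fun _ => (1:ℝ)) (X j ω)) / n := by
  rw [empMeas, Measure.smul_apply, Measure.finset_sum_apply, smul_eq_mul, ENNReal.toReal_mul]
  rw [ENNReal.toReal_inv, ENNReal.toReal_natCast]
  rw [ENNReal.toReal_sum (fun j _ => ?_)]
  · rw [div_eq_inv_mul]
    congr 1
    refine Finset.sum_congr rfl fun j _ => ?_
    rw [Measure.dirac_apply]
    by_cases h : X j ω ∈ S <;> simp [Set.indicator_apply, h]
  · rw [Measure.dirac_apply]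
    by_cases h : X j ω ∈ S <;> simp [Set.indicator_apply, h]

private lemma empMeas_isProb {Ω : Type*} [MeasurableSpace Ω] (X : ℕ → Ω → ℝ) {n : ℕ}
    (hn : 1 ≤ n) (ω : Ω) : IsProbabilityMeasure (empMeas X n ω) := by
  constructor
  rw [empMeas, Measure.smul_apply, Measure.finset_sum_apply, smul_eq_mul]
  simp only [Measure.dirac_apply_of_mem (Set.mem_univ _)]
  rw [Finset.sum_const, Nat.card_Icc]
  simp only [Nat.add_sub_cancel, nsmul_eq_mul, mul_one]
  rw [ENNReal.inv_mul_cancel (by exact_mod_cast Nat.cast_ne_zero.mpr (by omega : n ≠ 0))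
    (by simp)]

private lemma integral_empMeas {Ω : Type*} [MeasurableSpace Ω] (X : ℕ → Ω → ℝ) (n : ℕ) (ω : Ω)
    {g : ℝ → ℝ} (hg : Measurable g) :
    ∫ x, g x ∂(empMeas X n ω) = (∑ j ∈ Finset.Icc 1 n, g (X j ω)) / n := by
  rw [empMeas, integral_smul_measure, integral_finset_sum_measure (fun j _ => ?_)]
  · simp only [integral_dirac]
    rw [ENNReal.toReal_inv, ENNReal.toReal_natCast, smul_eq_mul, div_eq_inv_mul]
  · refine ⟨hg.aestronglyMeasurable, ?_⟩
    rw [HasFiniteIntegral, lintegral_dirac]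
    exact ENNReal.coe_lt_top

private lemma emp_tendsto {Ω : Type*} [MeasurableSpace Ω] (P' : Measure Ω)
    [IsProbabilityMeasure P'] (X : ℕ → Ω → ℝ) (hmeas : ∀ j, Measurable (X j))
    (hindep : iIndepFun X P')
    (P : Measure ℝ) [IsProbabilityMeasure P] (hdist : ∀ j, P'.map (X j) = P)
    {S : Set ℝ} (hS : MeasurableSet S) :
    ∀ᵐ ω ∂P', Tendsto (fun n => (empMeas X n ω S).toReal) atTop (𝓝 ((P S).toReal)) := by
  set φ : ℝ → ℝ := S.indicator fun _ => (1:ℝ) with hφ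
  have hφm : Measurable φ := measurable_const.indicator hS
  set Y : ℕ → Ω → ℝ := fun i => φ ∘ X (i + 1) with hY
  have hint : Integrable (Y 0) P' := by
    refine (integrable_const (1:ℝ)).mono' ((hφm.comp (hmeas 1)).aestronglyMeasurable) ?_
    refine Eventually.of_forall fun ω => ?_
    simp only [hY, Function.comp_apply, Real.norm_eq_abs, hφ]
    by_cases h : X (0 + 1) ω ∈ S <;> simp [Set.indicator_apply, h]
  have hpind : Pairwise (Function.onFun (IndepFun · · P') Y) := by
    intro i j hij
    exact (hindep.indepFun (show i + 1 ≠ j + 1 by omega)).comp hφm hφm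
  have hident : ∀ i, IdentDistrib (Y i) (Y 0) P' P' := by
    intro i
    refine IdentDistrib.comp ?_ hφm
    exact ⟨(hmeas _).aemeasurable, (hmeas _).aemeasurable, by rw [hdist, hdist]⟩
  have hslln := strong_law_ae_real Y hint hpind hident
  have hEY : P'[Y 0] = (P S).toReal := by
    have h1 : ∫ ω, φ (X 1 ω) ∂P' = ∫ x, φ x ∂P := by
      rw [← hdist 1, integral_map (hmeas 1).aemeasurable hφm.aestronglyMeasurable]
    have h2 : ∫ x, φ x ∂P = (P S).toReal := by
      rw [hφ, integral_indicator_const (1:ℝ) hS]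
      simp [measureReal_def]
    calc P'[Y 0] = ∫ ω, φ (X 1 ω) ∂P' := rfl
      _ = (P S).toReal := h1.trans h2
  rw [hEY] at hslln
  filter_upwards [hslln] with ω hω
  refine hω.congr fun n => ?_
  rw [empMeas_apply]
  congr 1
  rw [← Finset.Ico_add_one_right_eq_Icc, Finset.sum_Ico_eq_sum_range]
  simp [add_comm]
  rfl

private lemma level_set_form {g : ℝ → ℝ} (hg : Monotone g ∨ Antitone g) (c : ℝ) :
    {a | c < g a} = ∅ ∨ {a | c < g a} = univ ∨ (∃ b, {a | c < g a} = Ici b) ∨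
      (∃ b, {a | c < g a} = Ioi b) ∨ (∃ b, {a | c < g a} = Iic b) ∨
      (∃ b, {a | c < g a} = Iio b) := by
  set s := {a | c < g a} with hs
  rcases hg with hg | hg
  · have hup : ∀ x ∈ s, ∀ y, x ≤ y → y ∈ s := fun x hx y hxy => lt_of_lt_of_le hx (hg hxy)
    rcases Set.eq_empty_or_nonempty s with h | hne
    · exact Or.inl h
    by_cases hbd : BddBelow s
    · set b := sInf s with hb
      by_cases hbS : b ∈ s
      · refine Or.inr (Or.inr (Or.inl ⟨b, ?_⟩))
        ext x
        exact ⟨fun hx => csInf_le hbd hx, fun hx => hup b hbS x hx⟩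
      · refine Or.inr (Or.inr (Or.inr (Or.inl ⟨b, ?_⟩)))
        ext x
        constructor
        · intro hx
          rcases lt_or_eq_of_le (csInf_le hbd hx) with h | h
          · exact h
          · exact absurd (show b ∈ s by rw [hb, h]; exact hx) hbS
        · intro hx
          obtain ⟨y, hy, hyx⟩ := exists_lt_of_csInf_lt hne hx
          exact hup y hy x hyx.le
    · refine Or.inr (Or.inl ?_)
      ext x
      simp only [mem_univ, iff_true]
      obtain ⟨y, hy, hyx⟩ := not_bddBelow_iff.mp hbd x
      exact hup y hy x hyx.le
  · have hlo : ∀ x ∈ s, ∀ y, y ≤ x → y ∈ s := fun x hx y hxy => lt_of_lt_of_le hx (hg hxy)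
    rcases Set.eq_empty_or_nonempty s with h | hne
    · exact Or.inl h
    by_cases hbd : BddAbove s
    · set b := sSup s with hb
      by_cases hbS : b ∈ s
      · refine Or.inr (Or.inr (Or.inr (Or.inr (Or.inl ⟨b, ?_⟩))))
        ext x
        exact ⟨fun hx => le_csSup hbd hx, fun hx => hlo b hbS x hx⟩
      · refine Or.inr (Or.inr (Or.inr (Or.inr (Or.inr ⟨b, ?_⟩))))
        ext x
        constructor
        · intro hx
          rcases lt_or_eq_of_le (le_csSup hbd hx) with h | h
          · exact h
          · exact absurd (show b ∈ s by rw [hb, ← h]; exact hx) hbS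
        · intro hx
          obtain ⟨y, hy, hyx⟩ := exists_lt_of_lt_csSup hne hx
          exact hlo y hy x hyx.le
    · refine Or.inr (Or.inl ?_)
      ext x
      simp only [mem_univ, iff_true]
      obtain ⟨y, hy, hyx⟩ := not_bddAbove_iff.mp hbd x
      exact hlo y hy x hyx.le

private lemma bdd_integrable {μ : Measure ℝ} [IsFiniteMeasure μ] {g : ℝ → ℝ}
    (hg : Measurable g) {C : ℝ} (hC : ∀ x, |g x| ≤ C) : Integrable g μ :=
  (integrable_const C).mono' hg.aestronglyMeasurable
    (Eventually.of_forall fun x => by simpa [Real.norm_eq_abs] using hC x)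

/-- Layer-cake comparison: a uniform bound on half-line discrepancies gives a bound on
integrals of bounded monotone functions. -/
private lemma layer_bound (μ ν : Measure ℝ) [IsProbabilityMeasure μ] [IsProbabilityMeasure ν]
    {M r : ℝ} (hM : 0 < M) (hr : 0 ≤ r) {g : ℝ → ℝ} (hg : Monotone g ∨ Antitone g)
    (hgb : ∀ x, g x ∈ Set.Icc (-M) M)
    (h : ∀ b : ℝ, |(μ (Iic b)).toReal - (ν (Iic b)).toReal| ≤ r ∧
      |(μ (Iio b)).toReal - (ν (Iio b)).toReal| ≤ r) :
    |∫ x, g x ∂μ - ∫ x, g x ∂ν| ≤ 2 * M * r := by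
  have hgm : Measurable g := hg.elim Monotone.measurable Antitone.measurable
  set f : ℝ → ℝ := fun x => g x + M with hf
  have hfm : Measurable f := hgm.add_const M
  have hf_nn : ∀ x, 0 ≤ f x := fun x => by have := (hgb x).1; simp only [hf]; linarith
  have hf_le : ∀ x, f x ≤ 2 * M := fun x => by have := (hgb x).2; simp only [hf]; linarith
  have hfab : ∀ x, |f x| ≤ 2 * M := fun x => abs_le.mpr ⟨by linarith [hf_nn x], hf_le x⟩
  have hgab : ∀ x, |g x| ≤ M := fun x => abs_le.mpr ⟨(hgb x).1, (hgb x).2⟩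
  -- reduce to f
  have hsubeq : ∀ (ρ : Measure ℝ) [IsProbabilityMeasure ρ],
      ∫ x, f x ∂ρ = ∫ x, g x ∂ρ + M := by
    intro ρ _
    rw [hf, integral_add (bdd_integrable hgm hgab) (integrable_const M), integral_const]
    simp
  have hdiff : ∫ x, g x ∂μ - ∫ x, g x ∂ν = ∫ x, f x ∂μ - ∫ x, f x ∂ν := by
    rw [hsubeq μ, hsubeq ν]; ring
  have hanti : ∀ (ρ : Measure ℝ) [IsProbabilityMeasure ρ],
      Antitone fun t => (ρ {a | t < f a}).toReal := by
    intro ρ _ t1 t2 h12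
    exact mre (μ := ρ) fun a ha => lt_of_le_of_lt h12 ha
  have hintOn : ∀ (ρ : Measure ℝ) [IsProbabilityMeasure ρ],
      IntegrableOn (fun t => (ρ {a | t < f a}).toReal) (Ioc 0 (2 * M)) volume := by
    intro ρ _
    refine ((integrableOn_const_iff (C := (1:ℝ))).mpr (Or.inr ?_)).mono'
      (hanti ρ).measurable.aestronglyMeasurable ?_
    · rw [Real.volume_Ioc]; exact ENNReal.ofReal_lt_top
    · refine Eventually.of_forall fun t => ?_
      rw [Real.norm_eq_abs, abs_of_nonneg ENNReal.toReal_nonneg]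
      simpa using mre (μ := ρ) (subset_univ {a | t < f a})
  -- layer cake for both measures
  have hlc : ∀ (ρ : Measure ℝ) [IsProbabilityMeasure ρ],
      ∫ x, f x ∂ρ = ∫ t in Ioc 0 (2 * M), (ρ {a | t < f a}).toReal := by
    intro ρ _
    rw [(bdd_integrable hfm hfab (μ := ρ)).integral_eq_integral_meas_lt
      (Eventually.of_forall hf_nn)]
    have hzero : ∀ t ∈ Ioi (2 * M), (ρ {a | t < f a}).toReal = 0 := by
      intro t ht
      have : {a | t < f a} = ∅ := by
        ext a
        simp only [mem_setOf_eq, mem_empty_iff_false, iff_false, not_lt]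
        exact (hf_le a).trans (le_of_lt ht)
      rw [this]; simp
    have hintOn2 : IntegrableOn (fun t => (ρ {a | t < f a}).toReal) (Ioi (2 * M)) volume := by
      exact (integrableOn_zero).congr_fun (fun x hx => (hzero x hx).symm) measurableSet_Ioi
    simp only [measureReal_def]
    rw [← Ioc_union_Ioi_eq_Ioi (by positivity : (0:ℝ) ≤ 2 * M),
      setIntegral_union (Set.Ioc_disjoint_Ioi le_rfl) measurableSet_Ioi (hintOn ρ) hintOn2,
      setIntegral_congr_fun measurableSet_Ioi hzero]
    simp
  have hptw : ∀ t : ℝ, |(μ {a | t < f a}).toReal - (ν {a | t < f a}).toReal| ≤ r := by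
    intro t
    have hset : {a : ℝ | t < f a} = {a : ℝ | t - M < g a} := by
      ext a
      simp only [mem_setOf_eq, hf]
      constructor <;> intro <;> linarith
    rw [hset]
    rcases level_set_form hg (t - M) with heq | heq | ⟨b, heq⟩ | ⟨b, heq⟩ | ⟨b, heq⟩ | ⟨b, heq⟩
    · rw [heq]; simpa using hr
    · rw [heq]; simp only [measure_univ, ENNReal.toReal_one, sub_self, abs_zero]; exact hr
    · rw [heq, ← compl_Iio, mcompl measurableSet_Iio, mcompl measurableSet_Iio]
      have : 1 - (μ (Iio b)).toReal - (1 - (ν (Iio b)).toReal)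
          = (ν (Iio b)).toReal - (μ (Iio b)).toReal := by ring
      rw [this, abs_sub_comm]
      exact (h b).2
    · rw [heq, ← compl_Iic, mcompl measurableSet_Iic, mcompl measurableSet_Iic]
      have : 1 - (μ (Iic b)).toReal - (1 - (ν (Iic b)).toReal)
          = (ν (Iic b)).toReal - (μ (Iic b)).toReal := by ring
      rw [this, abs_sub_comm]
      exact (h b).1
    · rw [heq]; exact (h b).1
    · rw [heq]; exact (h b).2
  rw [hdiff, hlc μ, hlc ν, ← integral_sub (hintOn μ) (hintOn ν)]
  have hvol : volume (Ioc (0:ℝ) (2 * M)) < ⊤ := by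
    rw [Real.volume_Ioc]; exact ENNReal.ofReal_lt_top
  have := norm_setIntegral_le_of_norm_le_const_ae' (μ := volume)
    (f := fun t => (μ {a | t < f a}).toReal - (ν {a | t < f a}).toReal) hvol
    (Eventually.of_forall fun t _ => by rw [Real.norm_eq_abs]; exact hptw t)
  rw [Real.norm_eq_abs] at this
  refine this.trans ?_
  rw [measureReal_def, Real.volume_Ioc]
  rw [ENNReal.toReal_ofReal (by linarith)]
  rw [sub_zero]
  nlinarith [hr, hM.le]

/-- **Theorem (Glivenko–Cantelli, uniform over bounded monotone functions).**
For i.i.d. real random variables with distribution `P`, almost surely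
`sup { |∫ g dP̂_n − ∫ g dP| : g : ℝ → [−M,M] monotone } → 0`. -/
theorem stmt17 {Ω : Type*} [MeasurableSpace Ω] (P' : Measure Ω) [IsProbabilityMeasure P']
    (X : ℕ → Ω → ℝ) (hmeas : ∀ j, Measurable (X j))
    (hindep : iIndepFun X P')
    (P : Measure ℝ) [IsProbabilityMeasure P] (hdist : ∀ j, P'.map (X j) = P)
    (M : ℝ) (hM : 0 < M) :
    ∀ᵐ ω ∂P', Tendsto
      (fun n => ⨆ g : {g : ℝ → ℝ //
          (Monotone g ∨ Antitone g) ∧ ∀ x, g x ∈ Set.Icc (-M) M},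
        |∫ x, g.1 x ∂(empMeas X n ω) - ∫ x, g.1 x ∂P|)
      atTop (nhds 0) := by
  classical
  have hgrid : ∀ k : ℕ, ∃ (K : ℕ) (t : ℕ → ℝ), Monotone t ∧
      (P (Iio (t 0))).toReal ≤ 1 / ((k:ℝ) + 1) ∧
      (P (Ioi (t K))).toReal ≤ 1 / ((k:ℝ) + 1) ∧
      ∀ i < K, (P (Ioo (t i) (t (i + 1)))).toReal ≤ 1 / ((k:ℝ) + 1) :=
    fun k => grid_exists P (by positivity)
  choose K t hmono h0 hKk hgap using hgrid
  have hae : ∀ᵐ ω ∂P', ∀ (k i : ℕ),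
      Tendsto (fun n => (empMeas X n ω (Iic (t k i))).toReal) atTop
        (𝓝 ((P (Iic (t k i))).toReal)) ∧
      Tendsto (fun n => (empMeas X n ω (Iio (t k i))).toReal) atTop
        (𝓝 ((P (Iio (t k i))).toReal)) := by
    rw [ae_all_iff]
    intro k
    rw [ae_all_iff]
    intro i
    filter_upwards [emp_tendsto P' X hmeas hindep P hdist (measurableSet_Iic (a := t k i)),
      emp_tendsto P' X hmeas hindep P hdist (measurableSet_Iio (a := t k i))] with ω h1 h2
    exact ⟨h1, h2⟩
  filter_upwards [hae] with ω hω
  rw [NormedAddCommGroup.tendsto_nhds_zero]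
  intro ε hε
  obtain ⟨k, hk⟩ := exists_nat_gt (8 * M / ε)
  set η : ℝ := 1 / ((k:ℝ) + 1) with hη
  have hηpos : 0 < η := by positivity
  have hηk : η ≤ ε / (8 * M) := by
    have h1 : 8 * M < ε * k := by
      rw [div_lt_iff₀ hε] at hk
      linarith
    rw [hη, div_le_div_iff₀ (by positivity) (by positivity)]
    nlinarith
  have hev : ∀ᶠ n in atTop, ∀ i ∈ Finset.range (K k + 1),
      |(empMeas X n ω (Iic (t k i))).toReal - (P (Iic (t k i))).toReal| ≤ η ∧
      |(empMeas X n ω (Iio (t k i))).toReal - (P (Iio (t k i))).toReal| ≤ η := by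
    rw [eventually_all_finset]
    intro i _
    have h1 := (hω k i).1
    have h2 := (hω k i).2
    have e1 : ∀ᶠ n in atTop,
        dist (empMeas X n ω (Iic (t k i))).toReal (P (Iic (t k i))).toReal < η :=
      h1.eventually (Metric.ball_mem_nhds _ hηpos)
    have e2 : ∀ᶠ n in atTop,
        dist (empMeas X n ω (Iio (t k i))).toReal (P (Iio (t k i))).toReal < η :=
      h2.eventually (Metric.ball_mem_nhds _ hηpos)
    filter_upwards [e1, e2] with n hn1 hn2
    rw [Real.dist_eq] at hn1 hn2
    exact ⟨hn1.le, hn2.le⟩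
  filter_upwards [hev, eventually_ge_atTop 1] with n hn hn1
  haveI hprob : IsProbabilityMeasure (empMeas X n ω) := empMeas_isProb X hn1 ω
  have hb := interp (empMeas X n ω) P (K k) (t k) (hmono k) (h0 k) (hKk k) (hgap k)
    (fun i hi => hn i (Finset.mem_range.mpr (by omega)))
  have hval : ∀ g : {g : ℝ → ℝ //
      (Monotone g ∨ Antitone g) ∧ ∀ x, g x ∈ Set.Icc (-M) M},
      |∫ x, g.1 x ∂(empMeas X n ω) - ∫ x, g.1 x ∂P| ≤ 2 * M * (η + η) := fun g =>
    layer_bound _ _ hM (by positivity) g.2.1 g.2.2 hb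
  haveI hnonempty : Nonempty {g : ℝ → ℝ //
      (Monotone g ∨ Antitone g) ∧ ∀ x, g x ∈ Set.Icc (-M) M} :=
    ⟨⟨fun _ => 0, Or.inl monotone_const, fun _ => Set.mem_Icc.mpr ⟨by simpa using neg_nonpos.mpr hM.le, by simpa using hM.le⟩⟩⟩
  have hsup_le : (⨆ g : {g : ℝ → ℝ //
      (Monotone g ∨ Antitone g) ∧ ∀ x, g x ∈ Set.Icc (-M) M},
      |∫ x, g.1 x ∂(empMeas X n ω) - ∫ x, g.1 x ∂P|) ≤ 2 * M * (η + η) := ciSup_le hval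
  have hsup_nonneg : 0 ≤ ⨆ g : {g : ℝ → ℝ //
      (Monotone g ∨ Antitone g) ∧ ∀ x, g x ∈ Set.Icc (-M) M},
      |∫ x, g.1 x ∂(empMeas X n ω) - ∫ x, g.1 x ∂P| := by
    have hbdd : BddAbove (Set.range fun g : {g : ℝ → ℝ //
        (Monotone g ∨ Antitone g) ∧ ∀ x, g x ∈ Set.Icc (-M) M} =>
        |∫ x, g.1 x ∂(empMeas X n ω) - ∫ x, g.1 x ∂P|) := by
      refine ⟨2 * M * (η + η), ?_⟩
      rintro y ⟨g, rfl⟩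
      exact hval g
    exact le_trans (abs_nonneg _) (le_ciSup hbdd (Classical.arbitrary _))
  rw [Real.norm_eq_abs, abs_of_nonneg hsup_nonneg]
  have h8 : η * (8 * M) ≤ ε := (le_div_iff₀ (by positivity)).mp hηk
  have hfin : 2 * M * (η + η) ≤ ε / 2 := by nlinarith [h8]
  linarith [hsup_le]
end

section
/- Let μ and ν be probability measures on ℝ and let g : ℝ → ℝ be bounded and monotone. Then | ∫ g dμ − ∫ g dν | ≤ (sup_{x∈ℝ} g(x) − inf_{x∈ℝ} g(x)) · sup_{E∈ℝ} | μ((−∞,E]) − ν((−∞,E]) |. -/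
open MeasureTheory

lemma prob_toReal_compl (μ : Measure ℝ) [IsProbabilityMeasure μ] {s : Set ℝ}
    (hs : MeasurableSet s) : (μ sᶜ).toReal = 1 - (μ s).toReal := by
  rw [prob_compl_eq_one_sub hs, ENNReal.toReal_sub_of_le prob_le_one ENNReal.one_ne_top,
    ENNReal.toReal_one]

lemma kbdd (μ ν : Measure ℝ) [IsProbabilityMeasure μ] [IsProbabilityMeasure ν] :
    BddAbove (Set.range fun E => |(μ (Set.Iic E)).toReal - (ν (Set.Iic E)).toReal|) := by
  refine ⟨2, ?_⟩
  rintro x ⟨E, rfl⟩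
  have h1 : (μ (Set.Iic E)).toReal ≤ 1 := by
    simpa using ENNReal.toReal_mono (by simp) (prob_le_one (μ := μ) (s := Set.Iic E))
  have h2 : (ν (Set.Iic E)).toReal ≤ 1 := by
    simpa using ENNReal.toReal_mono (by simp) (prob_le_one (μ := ν) (s := Set.Iic E))
  have h3 : 0 ≤ (μ (Set.Iic E)).toReal := ENNReal.toReal_nonneg
  have h4 : 0 ≤ (ν (Set.Iic E)).toReal := ENNReal.toReal_nonneg
  rw [abs_le]; constructor <;> linarith

lemma iio_bound (μ ν : Measure ℝ) [IsProbabilityMeasure μ] [IsProbabilityMeasure ν] (r : ℝ) :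
    |(μ (Set.Iio r)).toReal - (ν (Set.Iio r)).toReal|
      ≤ ⨆ E : ℝ, |(μ (Set.Iic E)).toReal - (ν (Set.Iic E)).toReal| := by
  set u : ℕ → ℝ := fun n => r - 1 / (n + 1) with hu
  have humono : Monotone fun n => Set.Iic (u n) := by
    intro n m hnm
    apply Set.Iic_subset_Iic.2
    have : (1 : ℝ) / (m + 1) ≤ 1 / (n + 1) := by
      apply one_div_le_one_div_of_le (by positivity) (by exact_mod_cast by linarith)
    simp only [hu]; linarith
  have hUnion : ⋃ n, Set.Iic (u n) = Set.Iio r := by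
    ext x
    simp only [Set.mem_iUnion, Set.mem_Iic, Set.mem_Iio]
    constructor
    · rintro ⟨n, hn⟩
      have : (0:ℝ) < 1 / (n + 1) := by positivity
      simp only [hu] at hn; linarith
    · intro hx
      obtain ⟨n, hn⟩ := exists_nat_one_div_lt (sub_pos.2 hx)
      exact ⟨n, by simp only [hu]; linarith⟩
  have hμ : Filter.Tendsto (fun n => μ (Set.Iic (u n))) Filter.atTop (nhds (μ (Set.Iio r))) := by
    rw [← hUnion]; exact tendsto_measure_iUnion_atTop humono
  have hν : Filter.Tendsto (fun n => ν (Set.Iic (u n))) Filter.atTop (nhds (ν (Set.Iio r))) := by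
    rw [← hUnion]; exact tendsto_measure_iUnion_atTop humono
  have hμ' := (ENNReal.tendsto_toReal (measure_ne_top μ _)).comp hμ
  have hν' := (ENNReal.tendsto_toReal (measure_ne_top ν _)).comp hν
  have htend : Filter.Tendsto
      (fun n => |(μ (Set.Iic (u n))).toReal - (ν (Set.Iic (u n))).toReal|) Filter.atTop
      (nhds |(μ (Set.Iio r)).toReal - (ν (Set.Iio r)).toReal|) := (hμ'.sub hν').abs
  exact le_of_tendsto htend (Filter.Eventually.of_forall fun n => le_ciSup (kbdd μ ν) (u n))

lemma upperSet_bound (μ ν : Measure ℝ) [IsProbabilityMeasure μ] [IsProbabilityMeasure ν]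
    {S : Set ℝ} (hS : IsUpperSet S) (hms : MeasurableSet S) :
    |(μ S).toReal - (ν S).toReal|
      ≤ ⨆ E : ℝ, |(μ (Set.Iic E)).toReal - (ν (Set.Iic E)).toReal| := by
  have hK0 : (0:ℝ) ≤ ⨆ E : ℝ, |(μ (Set.Iic E)).toReal - (ν (Set.Iic E)).toReal| :=
    le_trans (abs_nonneg _) (le_ciSup (kbdd μ ν) 0)
  rcases S.eq_empty_or_nonempty with rfl | hne
  · simpa using hK0
  by_cases hbb : BddBelow S
  · set r := sInf S with hr
    by_cases hrS : r ∈ S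
    · have hSeq : S = Set.Ici r := by
        ext x
        exact ⟨fun hx => csInf_le hbb hx, fun hx => hS hx hrS⟩
      rw [hSeq, ← Set.compl_Iio, prob_toReal_compl μ measurableSet_Iio,
        prob_toReal_compl ν measurableSet_Iio]
      have : |1 - (μ (Set.Iio r)).toReal - (1 - (ν (Set.Iio r)).toReal)|
          = |(μ (Set.Iio r)).toReal - (ν (Set.Iio r)).toReal| := by
        rw [abs_sub_comm]; ring_nf
      rw [this]
      exact iio_bound μ ν r
    · have hSeq : S = Set.Ioi r := by
        ext x
        constructor
        · intro hx
          rcases lt_or_eq_of_le (csInf_le hbb hx) with h | h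
          · exact h
          · exact absurd (show r ∈ S by rw [hr, h]; exact hx) hrS
        · intro hx
          obtain ⟨y, hyS, hyx⟩ := (csInf_lt_iff hbb hne).1 hx
          exact hS hyx.le hyS
      rw [hSeq, ← Set.compl_Iic, prob_toReal_compl μ measurableSet_Iic,
        prob_toReal_compl ν measurableSet_Iic]
      have : |1 - (μ (Set.Iic r)).toReal - (1 - (ν (Set.Iic r)).toReal)|
          = |(μ (Set.Iic r)).toReal - (ν (Set.Iic r)).toReal| := by
        rw [abs_sub_comm]; ring_nf
      rw [this]
      exact le_ciSup (kbdd μ ν) r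
  · have hSeq : S = Set.univ := by
      ext x
      simp only [Set.mem_univ, iff_true]
      obtain ⟨y, hyS, hyx⟩ := not_bddBelow_iff.1 hbb x
      exact hS hyx.le hyS
    rw [hSeq]
    simpa using hK0

lemma stmt18_mono (μ ν : Measure ℝ) [IsProbabilityMeasure μ] [IsProbabilityMeasure ν]
    (g : ℝ → ℝ) (M : ℝ) (hM : ∀ x, |g x| ≤ M) (hm : Monotone g) :
    |∫ x, g x ∂μ - ∫ x, g x ∂ν|
      ≤ (sSup (Set.range g) - sInf (Set.range g)) *
        ⨆ E : ℝ, |(μ (Set.Iic E)).toReal - (ν (Set.Iic E)).toReal| := by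
  set K := ⨆ E : ℝ, |(μ (Set.Iic E)).toReal - (ν (Set.Iic E)).toReal| with hK
  have hK0 : (0:ℝ) ≤ K := le_trans (abs_nonneg _) (le_ciSup (kbdd μ ν) 0)
  set a := sInf (Set.range g) with ha
  set b := sSup (Set.range g) with hbdef
  have hbdda : BddAbove (Set.range g) := ⟨M, by rintro y ⟨x, rfl⟩; exact (abs_le.1 (hM x)).2⟩
  have hbddb : BddBelow (Set.range g) := ⟨-M, by rintro y ⟨x, rfl⟩; exact (abs_le.1 (hM x)).1⟩
  have hag : ∀ x, a ≤ g x := fun x => csInf_le hbddb ⟨x, rfl⟩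
  have hgb : ∀ x, g x ≤ b := fun x => le_csSup hbdda ⟨x, rfl⟩
  have hab : a ≤ b := le_trans (hag 0) (hgb 0)
  have hgmeas : Measurable g := hm.measurable
  have hint : ∀ (ρ : Measure ℝ), IsProbabilityMeasure ρ → Integrable g ρ := fun ρ hρ =>
    Integrable.mono' (integrable_const M) hgmeas.aestronglyMeasurable
      (Filter.Eventually.of_forall hM)
  set f := fun x => g x - a with hf
  have hfint : ∀ (ρ : Measure ℝ), IsProbabilityMeasure ρ → Integrable f ρ := fun ρ hρ =>
    (hint ρ hρ).sub (integrable_const a)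
  have hlayμ := (hfint μ inferInstance).integral_eq_integral_meas_lt
    (Filter.Eventually.of_forall fun x => sub_nonneg.2 (hag x))
  have hlayν := (hfint ν inferInstance).integral_eq_integral_meas_lt
    (Filter.Eventually.of_forall fun x => sub_nonneg.2 (hag x))
  have hdiff : ∫ x, g x ∂μ - ∫ x, g x ∂ν = ∫ x, f x ∂μ - ∫ x, f x ∂ν := by
    rw [show ∫ x, f x ∂μ = ∫ x, g x ∂μ - a by
        rw [integral_sub (hint μ inferInstance) (integrable_const a)]; simp,
      show ∫ x, f x ∂ν = ∫ x, g x ∂ν - a by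
        rw [integral_sub (hint ν inferInstance) (integrable_const a)]; simp]
    ring
  have hempty : ∀ t : ℝ, b - a < t → {x : ℝ | t < f x} = ∅ := by
    intro t ht
    ext x
    simp only [Set.mem_setOf_eq, Set.mem_empty_iff_false, iff_false, not_lt, hf]
    have := hgb x; linarith
  have hindint : Integrable ((Set.Ioc (0:ℝ) (b - a)).indicator fun _ => (1:ℝ))
      (volume.restrict (Set.Ioi 0)) :=
    IntegrableOn.integrable_indicator
      ((integrableOn_const_iff (s := Set.Ioc (0:ℝ) (b - a)) (C := (1:ℝ))
        (μ := volume.restrict (Set.Ioi 0))).2 (Or.inr measure_Ioc_lt_top)) measurableSet_Ioc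
  have hFint : ∀ (ρ : Measure ℝ), IsProbabilityMeasure ρ →
      Integrable (fun t : ℝ => (ρ {x : ℝ | t < f x}).toReal) (volume.restrict (Set.Ioi 0)) := by
    intro ρ hρ
    have hbd : ∀ t : ℝ, t ∈ Set.Ioi (0:ℝ) → ‖(ρ {x : ℝ | t < f x}).toReal‖
        ≤ (Set.Ioc (0:ℝ) (b - a)).indicator (fun _ => (1:ℝ)) t := by
      intro t ht
      by_cases h : t ≤ b - a
      · rw [Set.indicator_of_mem (Set.mem_Ioc.2 ⟨ht, h⟩)]
        rw [Real.norm_eq_abs, abs_of_nonneg ENNReal.toReal_nonneg]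
        simpa using ENNReal.toReal_mono (by simp) (prob_le_one (μ := ρ) (s := {x : ℝ | t < f x}))
      · rw [Set.indicator_of_notMem (fun hc => h (Set.mem_Ioc.1 hc).2), hempty t (not_le.1 h)]
        simp
    refine Integrable.mono' hindint
      ((Measurable.ennreal_toReal (Antitone.measurable ?_)).aestronglyMeasurable)
      ((ae_restrict_iff' measurableSet_Ioi).2 (Filter.Eventually.of_forall hbd))
    intro s t hst
    exact measure_mono fun x hx => lt_of_le_of_lt hst hx
  rw [hdiff, hlayμ, hlayν]
  simp only [measureReal_def]
  rw [← integral_sub (hFint μ inferInstance) (hFint ν inferInstance)]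
  have hptbound : ∀ t : ℝ, t ∈ Set.Ioi (0:ℝ) →
      ‖(μ {x : ℝ | t < f x}).toReal - (ν {x : ℝ | t < f x}).toReal‖
        ≤ (Set.Ioc (0:ℝ) (b - a)).indicator (fun _ => K) t := by
    intro t ht
    by_cases h : t ≤ b - a
    · rw [Set.indicator_of_mem (Set.mem_Ioc.2 ⟨ht, h⟩), Real.norm_eq_abs]
      refine upperSet_bound μ ν ?_ ?_
      · intro x y hxy hx
        simp only [Set.mem_setOf_eq, hf] at hx ⊢
        have := hm hxy; linarith
      · exact measurableSet_lt measurable_const ((hgmeas.sub measurable_const))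
    · rw [Set.indicator_of_notMem (fun hc => h (Set.mem_Ioc.1 hc).2), hempty t (not_le.1 h)]
      simp
  calc |∫ t in Set.Ioi (0:ℝ),
          ((μ {x : ℝ | t < f x}).toReal - (ν {x : ℝ | t < f x}).toReal)|
      ≤ ∫ t in Set.Ioi (0:ℝ), (Set.Ioc (0:ℝ) (b - a)).indicator (fun _ => K) t := by
        rw [← Real.norm_eq_abs]
        refine norm_integral_le_of_norm_le
          (IntegrableOn.integrable_indicator
            ((integrableOn_const_iff (C := K)).2 (Or.inr measure_Ioc_lt_top)) measurableSet_Ioc)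
          ((ae_restrict_iff' measurableSet_Ioi).2 (Filter.Eventually.of_forall hptbound))
    _ ≤ (b - a) * K := by
        rw [integral_indicator measurableSet_Ioc, Measure.restrict_restrict measurableSet_Ioc,
          Set.Ioc_inter_Ioi, integral_const, smul_eq_mul, measureReal_def, Measure.restrict_apply_univ]
        simp only [max_self]
        rw [Real.volume_Ioc, sub_zero, ENNReal.toReal_ofReal (by linarith : (0:ℝ) ≤ b - a)]

/-- **Theorem (partial-integration estimate for bounded monotone test
functions).**  For probability measures `μ, ν` on `ℝ` and bounded monotone
`g : ℝ → ℝ`,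
`|∫ g dμ − ∫ g dν| ≤ (sup g − inf g) · sup_E |μ((−∞,E]) − ν((−∞,E])|`. -/
theorem stmt18 (μ ν : Measure ℝ) [IsProbabilityMeasure μ] [IsProbabilityMeasure ν]
    (g : ℝ → ℝ) (hb : ∃ M : ℝ, ∀ x, |g x| ≤ M) (hmono : Monotone g ∨ Antitone g) :
    |∫ x, g x ∂μ - ∫ x, g x ∂ν|
      ≤ (sSup (Set.range g) - sInf (Set.range g)) *
        ⨆ E : ℝ, |(μ (Set.Iic E)).toReal - (ν (Set.Iic E)).toReal| := by
  obtain ⟨M, hM⟩ := hb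
  rcases hmono with hm | hm
  · exact stmt18_mono μ ν g M hM hm
  · have key := stmt18_mono μ ν (fun x => -g x) M
      (fun x => by rw [abs_neg]; exact hM x) (fun x y hxy => neg_le_neg (hm hxy))
    have hrange : Set.range (fun x => -g x) = -Set.range g := by
      ext y
      simp only [Set.mem_range, Set.mem_neg]
      constructor
      · rintro ⟨x, rfl⟩; exact ⟨x, by ring⟩
      · rintro ⟨x, hx⟩; exact ⟨x, by linarith⟩
    have h1 : sSup (Set.range fun x => -g x) = -sInf (Set.range g) := by
      rw [hrange, Real.sInf_def, neg_neg]
    have h2 : sInf (Set.range fun x => -g x) = -sSup (Set.range g) := by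
      rw [hrange, Real.sInf_def, neg_neg (Set.range g)]
    rw [h1, h2, integral_neg, integral_neg] at key
    have habs : |-∫ x, g x ∂μ - -∫ x, g x ∂ν| = |∫ x, g x ∂μ - ∫ x, g x ∂ν| := by
      rw [abs_sub_comm]; ring_nf
    rw [habs] at key
    convert key using 2
    ring
end
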